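/- Let E be a real Hilbert space and let F : E → ℝ be continuously Fréchet differentiable; let ∇F : E → E denote its gradient, characterized by ⟨∇F(x), v⟩ = F'(x)(v) for all x, v ∈ E. Let γ : ℝ → E be a differentiable curve satisfying γ'(t) = −∇F(γ(t)) for all t ∈ ℝ, and suppose the limits C₋ := lim_{t→−∞} γ(t) and C₊ := lim_{t→+∞} γ(t) exist in E. If F(C₋) = F(C₊), then γ is constant. -/

import Mathlib

open Filter
open scoped RealInnerProductSpace

/-- **Rigidity of gradient trajectories**: a negative gradient trajectory of a continuously
Fréchet differentiable functional `F` on a real Hilbert space, whose limits at `±∞` exist and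
at which `F` takes equal values, must be constant. -/
theorem gradient_trajectory_constant_of_limits_eq
    {E : Type*} [NormedAddCommGroup E] [InnerProductSpace ℝ E] [CompleteSpace E]
    (F : E → ℝ) (hF : ContDiff ℝ 1 F)
    (gradF : E → E) (hgrad : ∀ x v : E, ⟪gradF x, v⟫ = fderiv ℝ F x v)
    (γ : ℝ → E) (hγ : ∀ t : ℝ, HasDerivAt γ (-(gradF (γ t))) t)
    (Cm Cp : E)
    (hm : Tendsto γ atBot (nhds Cm))
    (hp : Tendsto γ atTop (nhds Cp))
    (heq : F Cm = F Cp) :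
    ∀ s t : ℝ, γ s = γ t := by
  have hFd : Differentiable ℝ F := hF.differentiable one_ne_zero
  have h1 : ∀ t : ℝ, HasDerivAt (fun t => F (γ t)) (-‖gradF (γ t)‖ ^ 2) t := by
    intro t
    have := (hFd (γ t)).hasFDerivAt.comp_hasDerivAt t (hγ t)
    have hv : fderiv ℝ F (γ t) (-(gradF (γ t))) = -‖gradF (γ t)‖ ^ 2 := by
      rw [← hgrad, inner_neg_right, real_inner_self_eq_norm_sq]
    rwa [hv] at this
  have hanti : Antitone (fun t => F (γ t)) := by
    apply antitone_of_deriv_nonpos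
    · exact fun t => (h1 t).differentiableAt
    · intro t
      rw [(h1 t).deriv]
      exact neg_nonpos.2 (by positivity)
  have hFm : Tendsto (fun t => F (γ t)) atBot (nhds (F Cm)) :=
    (hF.continuous.tendsto Cm).comp hm
  have hFp : Tendsto (fun t => F (γ t)) atTop (nhds (F Cp)) :=
    (hF.continuous.tendsto Cp).comp hp
  have hconst : ∀ t : ℝ, F (γ t) = F Cm := by
    intro t
    have hle : F (γ t) ≤ F Cm :=
      ge_of_tendsto hFm (eventually_atBot.2 ⟨t, fun s hs => hanti hs⟩)
    have hge : F Cp ≤ F (γ t) :=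
      le_of_tendsto hFp (eventually_atTop.2 ⟨t, fun s hs => hanti hs⟩)
    rw [heq] at hle ⊢
    exact le_antisymm hle hge
  have hzero : ∀ t : ℝ, gradF (γ t) = 0 := by
    intro t
    have h0 : HasDerivAt (fun t => F (γ t)) 0 t := by
      have : (fun t : ℝ => F (γ t)) = fun _ => F Cm := funext hconst
      rw [this]; exact hasDerivAt_const t _
    have := h0.unique (h1 t)
    have hn : ‖gradF (γ t)‖ = 0 := by nlinarith [norm_nonneg (gradF (γ t))]
    exact norm_eq_zero.mp hn
  intro s t
  apply is_const_of_deriv_eq_zero (f := γ)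
  · intro x; exact (hγ x).differentiableAt
  · intro x
    rw [(hγ x).deriv, hzero x, neg_zero]
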